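/- arXiv:1504.05976 — 3 statements merged into one kernel-verified Lean document; each statement's English description precedes it below -/
import Mathlib

section
/- Suppose a sequence of monic polynomials Q_n of degree n is defined by the connection formula Q_n(x) = L̂_n^α(x) + Λ_n · L̂_{n-1}^α(x) for n ≥ 1 (with Q_0 = 1), where Λ_n are nonzero constants and L̂_n^α are monic Laguerre polynomials. If Q_n satisfies a three-term recurrence x·Q_n(x) = Q_{n+1}(x) + β̃_n Q_n(x) + γ̃_n Q_{n-1}(x), then necessarily β̃_n = β_n + Λ_n − Λ_{n+1} and γ̃_n = (Λ_n/Λ_{n-1})·γ_{n-1}, where β_n = 2n+α+1 and γ_n = n(n+α) are the Laguerre recurrence coefficients. -/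
open Finset
open Polynomial

/-- Classical Laguerre polynomial `L_n^α(x)`. -/
noncomputable def laguerre (α : ℝ) (n : ℕ) (x : ℝ) : ℝ :=
  ∑ k ∈ Finset.range (n + 1),
    (-1 : ℝ) ^ k * (∏ j ∈ Finset.range (n - k), (α + k + 1 + j)) /
      ((n - k).factorial * k.factorial) * x ^ k

/-- Monic Laguerre polynomial `L̂_n^α(x) = (-1)^n n! L_n^α(x)`. -/
noncomputable def laguerreM (α : ℝ) (n : ℕ) (x : ℝ) : ℝ :=
  (-1 : ℝ) ^ n * n.factorial * laguerre α n x

/-- Laguerre recurrence coefficient `β_n = 2n + α + 1`. -/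
noncomputable def lagBeta (α : ℝ) (n : ℕ) : ℝ := 2 * n + α + 1

/-- Laguerre recurrence coefficient `γ_n = n(n + α)`. -/
noncomputable def lagGamma (α : ℝ) (n : ℕ) : ℝ := n * (n + α)


noncomputable def bcoef (α : ℝ) (n k : ℕ) : ℝ :=
  (-1 : ℝ) ^ n * n.factorial *
    ((-1 : ℝ) ^ k * (∏ j ∈ Finset.range (n - k), (α + k + 1 + j)) /
      ((n - k).factorial * k.factorial))

noncomputable def lagP (α : ℝ) (n : ℕ) : Polynomial ℝ :=
  ∑ k ∈ Finset.range (n + 1), Polynomial.C (bcoef α n k) * Polynomial.X ^ k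

lemma lagP_eval (α : ℝ) (n : ℕ) (x : ℝ) : (lagP α n).eval x = laguerreM α n x := by
  simp only [lagP, laguerreM, laguerre, bcoef, eval_finset_sum, eval_mul, eval_C, eval_pow,
    eval_X, Finset.mul_sum]
  refine Finset.sum_congr rfl fun k _ => by ring

lemma lagP_coeff (α : ℝ) {k n : ℕ} (h : k ≤ n) : (lagP α n).coeff k = bcoef α n k := by
  simp only [lagP, finset_sum_coeff, coeff_C_mul, coeff_X_pow, mul_ite, mul_one, mul_zero]
  rw [Finset.sum_ite_eq (Finset.range (n+1)) k (fun k => bcoef α n k)]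
  simp [Nat.lt_succ_iff, h]

lemma lagP_coeff_zero (α : ℝ) {k n : ℕ} (h : n < k) : (lagP α n).coeff k = 0 := by
  simp only [lagP, finset_sum_coeff, coeff_C_mul, coeff_X_pow, mul_ite, mul_one, mul_zero]
  rw [Finset.sum_ite_eq (Finset.range (n+1)) k (fun k => bcoef α n k)]
  simp [Nat.lt_succ_iff]
  omega


lemma neg_one_pow_two_mul (k : ℕ) : ((-1 : ℝ)) ^ (k * 2) = 1 := by
  rw [mul_comm, pow_mul]; norm_num

lemma bcoef_self (α : ℝ) (n : ℕ) : bcoef α n n = 1 := by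
  have hf : (n.factorial : ℝ) ≠ 0 := Nat.cast_ne_zero.mpr (Nat.factorial_ne_zero n)
  simp only [bcoef]
  simp only [Nat.sub_self, Finset.prod_range_zero, Nat.factorial_zero]
  field_simp
  ring_nf
  rw [neg_one_pow_two_mul]

lemma bcoef_one (α : ℝ) (k : ℕ) : bcoef α (k+1) k = -((k+1) * (α+k+1)) := by
  have h : k + 1 - k = 1 := by omega
  have hf : (k.factorial : ℝ) ≠ 0 := Nat.cast_ne_zero.mpr (Nat.factorial_ne_zero k)
  simp only [bcoef, h, Nat.factorial_succ, Finset.prod_range_one, Nat.factorial_one]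
  push_cast
  field_simp
  ring_nf
  simp only [neg_one_pow_two_mul]
  try ring

lemma bcoef_two (α : ℝ) (k : ℕ) :
    bcoef α (k+2) k = (k+2)*(k+1)/2 * ((α+k+1)*(α+k+2)) := by
  have h : k + 2 - k = 2 := by omega
  have hf : (k.factorial : ℝ) ≠ 0 := Nat.cast_ne_zero.mpr (Nat.factorial_ne_zero k)
  simp only [bcoef, h, Nat.factorial_succ, Finset.prod_range_succ, Finset.prod_range_one,
    Nat.factorial_two]
  push_cast
  field_simp
  ring_nf
  simp only [neg_one_pow_two_mul]
  try ring

lemma bcoef_three (α : ℝ) (k : ℕ) :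
    bcoef α (k+3) k = -((k+3)*(k+2)*(k+1)/6 * ((α+k+1)*(α+k+2)*(α+k+3))) := by
  have h : k + 3 - k = 3 := by omega
  have hf : (k.factorial : ℝ) ≠ 0 := Nat.cast_ne_zero.mpr (Nat.factorial_ne_zero k)
  simp only [bcoef, h, Nat.factorial_succ, Finset.prod_range_succ, Finset.prod_range_one,
    Nat.factorial_two, Nat.factorial_one, Nat.factorial_zero]
  push_cast
  field_simp
  ring_nf
  simp only [neg_one_pow_two_mul]
  try ring

noncomputable def Qpoly (α : ℝ) (Λ : ℕ → ℝ) : ℕ → Polynomial ℝ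
  | 0 => 1
  | (n+1) => lagP α (n+1) + Polynomial.C (Λ (n+1)) * lagP α n

lemma Qpoly_coeff_zero (α : ℝ) (Λ : ℕ → ℝ) {n k : ℕ} (h : n < k) :
    (Qpoly α Λ n).coeff k = 0 := by
  match n with
  | 0 =>
    have : k ≠ 0 := by omega
    simp [Qpoly, Polynomial.coeff_one, this]
  | (p+1) =>
    simp [Qpoly, lagP_coeff_zero α h, lagP_coeff_zero α (show p < k by omega)]

section Main
variable {α : ℝ} {Λ βt γt : ℕ → ℝ} {Q : ℕ → ℝ → ℝ}

theorem key (hQ0 : ∀ x, Q 0 x = 1)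
    (hQ : ∀ n, 1 ≤ n → ∀ x, Q n x = laguerreM α n x + Λ n * laguerreM α (n - 1) x)
    (hrec : ∀ n, 1 ≤ n → ∀ x,
      x * Q n x = Q (n + 1) x + βt n * Q n x + γt n * Q (n - 1) x) :
    ∀ p : ℕ, Polynomial.X * Qpoly α Λ (p+1) =
      Qpoly α Λ (p+2) + Polynomial.C (βt (p+1)) * Qpoly α Λ (p+1)
        + Polynomial.C (γt (p+1)) * Qpoly α Λ p := by
  have hQe : ∀ n x, Q n x = (Qpoly α Λ n).eval x := by
    intro n x
    match n with
    | 0 => simp [Qpoly, hQ0]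
    | (p+1) => simp [Qpoly, hQ (p+1) (Nat.le_add_left 1 p), lagP_eval]
  intro p
  apply Polynomial.funext
  intro x
  have := hrec (p+1) (Nat.le_add_left 1 p) x
  simp only [hQe] at this
  simpa using this

lemma Qpoly_coeff_le (α : ℝ) (Λ : ℕ → ℝ) {p k : ℕ} (h : k ≤ p) :
    (Qpoly α Λ (p+1)).coeff k = bcoef α (p+1) k + Λ (p+1) * bcoef α p k := by
  simp [Qpoly, lagP_coeff α (h.trans (Nat.le_succ p)), lagP_coeff α h]

lemma Qpoly_coeff_lead (α : ℝ) (Λ : ℕ → ℝ) (p : ℕ) :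
    (Qpoly α Λ (p+1)).coeff (p+1) = 1 := by
  simp [Qpoly, lagP_coeff α (le_refl (p+1)), bcoef_self, lagP_coeff_zero α (Nat.lt_succ_self p)]

theorem beta_eq (hQ0 : ∀ x, Q 0 x = 1)
    (hQ : ∀ n, 1 ≤ n → ∀ x, Q n x = laguerreM α n x + Λ n * laguerreM α (n - 1) x)
    (hrec : ∀ n, 1 ≤ n → ∀ x,
      x * Q n x = Q (n + 1) x + βt n * Q n x + γt n * Q (n - 1) x)
    (p : ℕ) : βt (p+1) = (2*(p+1) + α + 1) + Λ (p+1) - Λ (p+2) := by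
  have h := congrArg (fun r : Polynomial ℝ => r.coeff (p+1)) (key hQ0 hQ hrec p)
  simp only [Polynomial.coeff_X_mul, Polynomial.coeff_add, Polynomial.coeff_C_mul] at h
  rw [Qpoly_coeff_le α Λ (le_refl p), Qpoly_coeff_le α Λ (le_refl (p+1)),
    Qpoly_coeff_lead α Λ p, Qpoly_coeff_zero α Λ (Nat.lt_succ_self p)] at h
  simp only [bcoef_self, bcoef_one, show p+1+1 = p+2 from rfl] at h
  push_cast at h ⊢
  linear_combination -h

theorem E1lem (hQ0 : ∀ x, Q 0 x = 1)
    (hQ : ∀ n, 1 ≤ n → ∀ x, Q n x = laguerreM α n x + Λ n * laguerreM α (n - 1) x)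
    (hrec : ∀ n, 1 ≤ n → ∀ x,
      x * Q n x = Q (n + 1) x + βt n * Q n x + γt n * Q (n - 1) x)
    (m : ℕ) :
    bcoef α (m+2) m + Λ (m+2) * bcoef α (m+1) m
      = (bcoef α (m+3) (m+1) + Λ (m+3) * bcoef α (m+2) (m+1))
        + βt (m+2) * (bcoef α (m+2) (m+1) + Λ (m+2)) + γt (m+2) := by
  have h := congrArg (fun r : Polynomial ℝ => r.coeff (m+1)) (key hQ0 hQ hrec (m+1))
  simp only [Polynomial.coeff_X_mul, Polynomial.coeff_add, Polynomial.coeff_C_mul] at h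
  rw [Qpoly_coeff_le α Λ (Nat.le_succ m), Qpoly_coeff_le α Λ (le_refl (m+1)),
    Qpoly_coeff_le α Λ (Nat.le_succ (m+1)), Qpoly_coeff_lead α Λ m] at h
  simp only [bcoef_self, show m+1+1 = m+2 from rfl, show m+1+2 = m+3 from rfl,
    show m+2+1 = m+3 from rfl] at h
  linarith [h]

theorem E2lem (hQ0 : ∀ x, Q 0 x = 1)
    (hQ : ∀ n, 1 ≤ n → ∀ x, Q n x = laguerreM α n x + Λ n * laguerreM α (n - 1) x)
    (hrec : ∀ n, 1 ≤ n → ∀ x,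
      x * Q n x = Q (n + 1) x + βt n * Q n x + γt n * Q (n - 1) x)
    (q : ℕ) :
    bcoef α (q+3) q + Λ (q+3) * bcoef α (q+2) q
      = (bcoef α (q+4) (q+1) + Λ (q+4) * bcoef α (q+3) (q+1))
        + βt (q+3) * (bcoef α (q+3) (q+1) + Λ (q+3) * bcoef α (q+2) (q+1))
        + γt (q+3) * (bcoef α (q+2) (q+1) + Λ (q+2)) := by
  have h := congrArg (fun r : Polynomial ℝ => r.coeff (q+1)) (key hQ0 hQ hrec (q+2))
  simp only [Polynomial.coeff_X_mul, Polynomial.coeff_add, Polynomial.coeff_C_mul] at h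
  rw [Qpoly_coeff_le α Λ (show q ≤ q+2 by omega), Qpoly_coeff_le α Λ (show q+1 ≤ q+3 by omega),
    Qpoly_coeff_le α Λ (show q+1 ≤ q+2 by omega), Qpoly_coeff_le α Λ (le_refl (q+1))] at h
  simp only [bcoef_self, show q+2+1 = q+3 from rfl, show q+2+2 = q+4 from rfl,
    show q+3+1 = q+4 from rfl] at h
  linarith [h]

theorem E2zero (hQ0 : ∀ x, Q 0 x = 1)
    (hQ : ∀ n, 1 ≤ n → ∀ x, Q n x = laguerreM α n x + Λ n * laguerreM α (n - 1) x)
    (hrec : ∀ n, 1 ≤ n → ∀ x,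
      x * Q n x = Q (n + 1) x + βt n * Q n x + γt n * Q (n - 1) x) :
    0 = (bcoef α 3 0 + Λ 3 * bcoef α 2 0)
        + βt 2 * (bcoef α 2 0 + Λ 2 * bcoef α 1 0)
        + γt 2 * (bcoef α 1 0 + Λ 1) := by
  have h := congrArg (fun r : Polynomial ℝ => r.coeff 0) (key hQ0 hQ hrec 1)
  simp only [Polynomial.mul_coeff_zero, Polynomial.coeff_X_zero, zero_mul,
    Polynomial.coeff_add, Polynomial.coeff_C_mul] at h
  rw [Qpoly_coeff_le α Λ (show 0 ≤ 2 by omega), Qpoly_coeff_le α Λ (show 0 ≤ 1 by omega),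
    Qpoly_coeff_le α Λ (le_refl 0)] at h
  simp only [bcoef_self] at h
  norm_num at h ⊢
  linarith [h]

theorem gamma_eq (hQ0 : ∀ x, Q 0 x = 1)
    (hQ : ∀ n, 1 ≤ n → ∀ x, Q n x = laguerreM α n x + Λ n * laguerreM α (n - 1) x)
    (hrec : ∀ n, 1 ≤ n → ∀ x,
      x * Q n x = Q (n + 1) x + βt n * Q n x + γt n * Q (n - 1) x)
    (m : ℕ) :
    γt (m+2) * Λ (m+1) = Λ (m+2) * (((m:ℝ)+1) * (((m:ℝ)+1) + α)) := by
  match m with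
  | 0 =>
    have e1 := E1lem hQ0 hQ hrec 0
    have e2 := E2zero hQ0 hQ hrec
    have hb := beta_eq hQ0 hQ hrec 1
    have b10 := bcoef_one α 0
    have b20 := bcoef_two α 0
    have b30 := bcoef_three α 0
    have b21 := bcoef_one α 1
    have b31 := bcoef_two α 1
    norm_num at e1 e2 hb b10 b20 b30 b21 b31 ⊢
    rw [b10, b20, b31, b21] at e1
    rw [b10, b20, b30] at e2
    rw [hb] at e1 e2
    linear_combination (-(α+1)) * e1 - e2
  | (q+1) =>
    have e1 := E1lem hQ0 hQ hrec (q+1)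
    have e2 := E2lem hQ0 hQ hrec q
    have hb := beta_eq hQ0 hQ hrec (q+2)
    have o1 := bcoef_one α (q+1)
    have o2 := bcoef_one α (q+2)
    have t0 := bcoef_two α q
    have t1 := bcoef_two α (q+1)
    have t2 := bcoef_two α (q+2)
    have r0 := bcoef_three α q
    have r1 := bcoef_three α (q+1)
    simp only [show q+1+1 = q+2 from rfl, show q+1+2 = q+3 from rfl, show q+1+3 = q+4 from rfl,
      show q+2+1 = q+3 from rfl, show q+2+2 = q+4 from rfl] at e1 hb o1 o2 t0 t1 t2 r0 r1
    rw [t1, o1, t2, o2] at e1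
    rw [r0, t0, r1, t1, o1] at e2
    rw [hb] at e1 e2
    push_cast at e1 e2 ⊢
    linear_combination (-((q:ℝ)+2)*(α+(q:ℝ)+2)) * e1 - e2

end Main

/-- If monic polynomials `Q_n = L̂_n^α + Λ_n L̂_{n-1}^α` satisfy a three-term
recurrence with coefficients `β̃_n`, `γ̃_n`, then necessarily
`β̃_n = β_n + Λ_n − Λ_{n+1}` and `γ̃_n = (Λ_n/Λ_{n-1}) γ_{n-1}`. -/
theorem geronimus_recurrence_coefficients (α : ℝ) (Λ βt γt : ℕ → ℝ) (Q : ℕ → ℝ → ℝ)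
    (hΛ : ∀ n, Λ n ≠ 0)
    (hQ0 : ∀ x, Q 0 x = 1)
    (hQ : ∀ n, 1 ≤ n → ∀ x, Q n x = laguerreM α n x + Λ n * laguerreM α (n - 1) x)
    (hrec : ∀ n, 1 ≤ n → ∀ x,
      x * Q n x = Q (n + 1) x + βt n * Q n x + γt n * Q (n - 1) x) :
    (∀ n, 1 ≤ n → βt n = lagBeta α n + Λ n - Λ (n + 1)) ∧
    (∀ n, 2 ≤ n → γt n = Λ n / Λ (n - 1) * lagGamma α (n - 1)) := by
  constructor
  · intro n hn
    obtain ⟨p, rfl⟩ : ∃ p, n = p + 1 := ⟨n - 1, by omega⟩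
    have hb := beta_eq hQ0 hQ hrec p
    simp only [lagBeta]
    push_cast at hb ⊢
    linarith [hb]
  · intro n hn
    obtain ⟨m, rfl⟩ : ∃ m, n = m + 2 := ⟨n - 2, by omega⟩
    have hg := gamma_eq hQ0 hQ hrec m
    have h1 : m + 2 - 1 = m + 1 := rfl
    rw [h1, lagGamma]
    field_simp [hΛ (m+1)]
    push_cast
    linear_combination hg
end

section
/- For α > −1 and z ∈ ℂ with z ∉ [0,∞), the Laguerre function of the second kind F̂_n^α(z) = ∫₀^∞ L̂_n^α(t) t^α e^{−t}/(t−z) dt satisfies F̂_n^α(z) = (−1)^n n! Γ(n+α+1) U(n+1, 1−α, z e^{±πi}), with plus sign if −π < arg z ≤ 0 and minus sign if 0 < arg z ≤ π, where U is the confluent hypergeometric function of the second kind. -/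
open Finset

namespace FhatAux

open MeasureTheory Set Complex Filter Real Topology

noncomputable def lagC (α : ℝ) (n k : ℕ) : ℝ :=
  (-1:ℝ)^n * n.factorial *
    ((-1:ℝ)^k * (∏ j ∈ Finset.range (n-k), (α+k+1+j)) / ((n-k).factorial * k.factorial))

lemma laguerreM_eq_sum (α : ℝ) (n : ℕ) (t : ℝ) :
    laguerreM α n t = ∑ k ∈ range (n+1), lagC α n k * t ^ k := by
  unfold laguerreM laguerre lagC
  rw [Finset.mul_sum]
  exact Finset.sum_congr rfl fun k _ => by ring

/-- integrability of `t^β e^{-pt}` on `(0,∞)`. -/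
lemma integrableOn_rpow_exp {β p : ℝ} (hβ : -1 < β) (hp : 0 < p) :
    IntegrableOn (fun t : ℝ => t ^ β * Real.exp (-(p * t))) (Ioi 0) := by
  have h0 : IntegrableOn (fun x : ℝ => Real.exp (-x) * x ^ β) (Ioi 0) := by
    simpa using Real.GammaIntegral_convergent (show (0:ℝ) < β + 1 by linarith)
  have h1 : IntegrableOn (fun x : ℝ => Real.exp (-(p*x)) * (p*x) ^ β) (Ioi 0) := by
    have := (integrableOn_Ioi_comp_mul_left_iff (fun x : ℝ => Real.exp (-x) * x ^ β) 0 hp).mpr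
      (by simpa using h0)
    simpa using this
  have h2 : IntegrableOn (fun x : ℝ => (p ^ β)⁻¹ * (Real.exp (-(p*x)) * (p*x) ^ β)) (Ioi 0) :=
    h1.const_mul (p ^ β)⁻¹
  apply h2.congr_fun ?_ measurableSet_Ioi
  intro x hx
  rw [Set.mem_Ioi] at hx
  simp only []
  rw [Real.mul_rpow hp.le hx.le]
  field_simp [(Real.rpow_pos_of_pos hp β).ne']

lemma integrableOn_monomial (α : ℝ) (hα : -1 < α) (k : ℕ) {p : ℝ} (hp : 0 < p) :
    IntegrableOn (fun t : ℝ => t ^ k * t ^ α * Real.exp (-(p * t))) (Ioi 0) := by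
  apply (integrableOn_rpow_exp (show (-1:ℝ) < α + k by have : (0:ℝ) ≤ k := Nat.cast_nonneg k; linarith) hp).congr_fun ?_
    measurableSet_Ioi
  intro x hx
  rw [Set.mem_Ioi] at hx
  simp only []
  rw [Real.rpow_add hx, Real.rpow_natCast]
  ring

lemma integrableOn_lag (α : ℝ) (hα : -1 < α) (n : ℕ) {p : ℝ} (hp : 0 < p) :
    IntegrableOn (fun t : ℝ => laguerreM α n t * t ^ α * Real.exp (-(p * t))) (Ioi 0) := by
  have : ∀ t : ℝ, laguerreM α n t * t ^ α * Real.exp (-(p * t)) =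
      ∑ k ∈ range (n+1), lagC α n k * (t ^ k * t ^ α * Real.exp (-(p * t))) := by
    intro t
    rw [laguerreM_eq_sum, Finset.sum_mul, Finset.sum_mul]
    exact Finset.sum_congr rfl fun k _ => by ring
  simp_rw [this]
  exact integrable_finset_sum _ fun k _ =>
    ((integrableOn_monomial α hα k hp).const_mul _)


lemma Gamma_prod {x : ℝ} (hx : 0 < x) (m : ℕ) :
    (∏ j ∈ range m, (x + j)) * Real.Gamma x = Real.Gamma (x + m) := by
  induction m with
  | zero => simp
  | succ m ih =>
    rw [Finset.prod_range_succ, mul_comm _ (x + m), mul_assoc, ih]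
    rw [show x + ((m+1 : ℕ):ℝ) = (x + m) + 1 by push_cast; ring, Real.Gamma_add_one (by positivity)]

/-- The key real integral: `∫₀^∞ L̂ⁿ_α(t) t^α e^{-pt} dt`. -/
lemma key_integral (α : ℝ) (hα : -1 < α) (n : ℕ) {p : ℝ} (hp : 0 < p) :
    ∫ t in Ioi (0:ℝ), laguerreM α n t * t ^ α * Real.exp (-(p * t)) =
      (-1:ℝ)^n * Real.Gamma (α + n + 1) * (p - 1)^n / p ^ (α + n + 1) := by
  have hstep : ∀ t ∈ Ioi (0:ℝ), laguerreM α n t * t ^ α * Real.exp (-(p * t)) =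
      ∑ k ∈ range (n+1), lagC α n k * (t ^ k * t ^ α * Real.exp (-(p * t))) := by
    intro t _
    rw [laguerreM_eq_sum, Finset.sum_mul, Finset.sum_mul]
    exact Finset.sum_congr rfl fun k _ => by ring
  rw [setIntegral_congr_fun measurableSet_Ioi hstep,
    integral_finset_sum _ fun k _ => ((integrableOn_monomial α hα k hp).const_mul _)]
  have hmono : ∀ k : ℕ, ∫ t in Ioi (0:ℝ), lagC α n k * (t ^ k * t ^ α * Real.exp (-(p * t)))
      = lagC α n k * ((1/p) ^ (α + k + 1) * Real.Gamma (α + k + 1)) := by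
    intro k
    rw [MeasureTheory.integral_const_mul]
    congr 1
    rw [← Real.integral_rpow_mul_exp_neg_mul_Ioi
      (show (0:ℝ) < α + k + 1 by have : (0:ℝ) ≤ k := Nat.cast_nonneg k; linarith) hp]
    apply setIntegral_congr_fun measurableSet_Ioi
    intro x hx
    rw [Set.mem_Ioi] at hx
    simp only []
    rw [show α + (k:ℝ) + 1 - 1 = α + k by ring, Real.rpow_add hx, Real.rpow_natCast]
    ring
  simp_rw [hmono]
  have hterm : ∀ k ∈ range (n+1),
      lagC α n k * ((1/p) ^ (α + (k:ℝ) + 1) * Real.Gamma (α + k + 1)) =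
      ((-1:ℝ)^n * Real.Gamma (α + n + 1) * (1/p) ^ (α+1)) *
        ((-(1/p))^k * 1 ^ (n - k) * (n.choose k : ℝ)) := by
    intro k hk
    rw [Finset.mem_range] at hk
    have hk' : k ≤ n := Nat.lt_succ_iff.mp hk
    have hΓ : (∏ j ∈ range (n-k), (α+(k:ℝ)+1+(j:ℝ))) * Real.Gamma (α+k+1)
        = Real.Gamma (α+n+1) := by
      rw [Gamma_prod (show (0:ℝ) < α+(k:ℝ)+1 by have : (0:ℝ) ≤ k := Nat.cast_nonneg k; linarith)
        (n-k)]
      congr 1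
      rw [Nat.cast_sub hk']
      ring
    have hch : (n.factorial : ℝ) = (n.choose k : ℝ) * k.factorial * (n-k).factorial := by
      exact_mod_cast congrArg (Nat.cast (R := ℝ))
        (Nat.choose_mul_factorial_mul_factorial hk').symm
    have hpow : (1/p) ^ (α + (k:ℝ) + 1) = (1/p) ^ (α+1) * (1/p) ^ (k:ℕ) := by
      rw [← Real.rpow_natCast (1/p) k, ← Real.rpow_add (by positivity)]
      ring_nf
    have h1 : ((n-k).factorial : ℝ) ≠ 0 := Nat.cast_ne_zero.mpr (Nat.factorial_ne_zero _)
    have h2 : (k.factorial : ℝ) ≠ 0 := Nat.cast_ne_zero.mpr (Nat.factorial_ne_zero _)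
    rw [lagC, hpow, hch]
    rw [show ((-1:ℝ)^n * ((n.choose k : ℝ) * k.factorial * (n-k).factorial) *
      ((-1:ℝ)^k * (∏ j ∈ range (n-k), (α+(k:ℝ)+1+(j:ℝ))) / ((n-k).factorial * k.factorial)) *
      ((1/p) ^ (α+1) * (1/p) ^ (k:ℕ) * Real.Gamma (α+k+1))) =
      ((-1:ℝ)^n * ((n.choose k : ℝ) * k.factorial * (n-k).factorial) *
      ((-1:ℝ)^k / ((n-k).factorial * k.factorial)) *
      ((1/p) ^ (α+1) * (1/p) ^ (k:ℕ)) *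
      ((∏ j ∈ range (n-k), (α+(k:ℝ)+1+(j:ℝ))) * Real.Gamma (α+k+1))) by ring, hΓ]
    field_simp
    ring
  rw [Finset.sum_congr rfl hterm, ← Finset.mul_sum, ← add_pow]
  have hp' : p ≠ 0 := hp.ne'
  have e1 : (-(1/p) + 1) ^ n = (p-1)^n / p^n := by
    rw [← div_pow]
    congr 1
    field_simp
    ring
  have e2 : p ^ (α + (n:ℝ) + 1) = p ^ (α+1) * p ^ (n:ℕ) := by
    rw [← Real.rpow_natCast p n, ← Real.rpow_add hp]
    ring_nf
  have e3 : (1/p) ^ (α+1) = (p ^ (α+1))⁻¹ := by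
    rw [one_div, Real.inv_rpow hp.le]
  rw [e1, e2, e3]
  have h4 : p ^ (α+1) ≠ 0 := (Real.rpow_pos_of_pos hp _).ne'
  have h5 : p ^ (n:ℕ) ≠ 0 := pow_ne_zero _ hp'
  field_simp


lemma norm_cexp_neg_mul (c : ℂ) (s : ℝ) :
    ‖Complex.exp (-(c * s))‖ = Real.exp (-(c.re * s)) := by
  rw [Complex.norm_exp]
  congr 1
  simp [Complex.mul_re]

lemma integrableOn_cexp {c : ℂ} (hc : 0 < c.re) :
    IntegrableOn (fun s : ℝ => Complex.exp (-(c * s))) (Ioi 0) := by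
  apply Integrable.mono' (g := fun s => Real.exp (-(c.re * s)))
  · have := exp_neg_integrableOn_Ioi 0 hc
    simp only [neg_mul] at this
    exact this
  · exact (Complex.continuous_exp.comp
      ((continuous_const.mul Complex.continuous_ofReal).neg)).aestronglyMeasurable
  · exact Eventually.of_forall fun s => le_of_eq (norm_cexp_neg_mul c s)

lemma integral_exp_neg_mul_real {c : ℝ} (hc : 0 < c) :
    ∫ s in Ioi (0:ℝ), Real.exp (-(c * s)) = c⁻¹ := by
  have h := Real.integral_rpow_mul_exp_neg_mul_Ioi one_pos hc
  simp only [sub_self, Real.rpow_zero, one_mul, Real.Gamma_one, Real.rpow_one, mul_one] at h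
  rw [h, one_div]

lemma integral_cexp {c : ℂ} (hc : 0 < c.re) :
    ∫ s in Ioi (0:ℝ), Complex.exp (-(c * s)) = c⁻¹ := by
  have hc0 : c ≠ 0 := fun h => by simp [h] at hc
  have hder : ∀ x ∈ Ioi (0:ℝ),
      HasDerivAt (fun x : ℝ => -c⁻¹ * Complex.exp (-(c * x))) (Complex.exp (-(c * x))) x := by
    intro x _
    have h2 : HasDerivAt (fun z : ℂ => -(c * z)) (-c) (x:ℂ) := by
      exact (((hasDerivAt_id (x:ℂ)).const_mul c).neg).congr_deriv (by simp)
    have h3 := (h2.cexp).const_mul (-c⁻¹)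
    have h4 : -c⁻¹ * (Complex.exp (-(c * x)) * -c) = Complex.exp (-(c * x)) := by
      field_simp
    exact (h4 ▸ h3).comp_ofReal
  have hcont : ContinuousWithinAt (fun x : ℝ => -c⁻¹ * Complex.exp (-(c * x))) (Ici 0) 0 :=
    (Continuous.continuousWithinAt (by continuity))
  have htend : Tendsto (fun x : ℝ => -c⁻¹ * Complex.exp (-(c * x))) atTop (𝓝 0) := by
    have h1 : Tendsto (fun x : ℝ => c.re * x) atTop atTop :=
      Tendsto.const_mul_atTop hc tendsto_id
    have h2 : Tendsto (fun x : ℝ => ‖c⁻¹‖ * Real.exp (-(c.re * x))) atTop (𝓝 0) := by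
      have h3 := (Real.tendsto_exp_neg_atTop_nhds_zero.comp h1).const_mul ‖c⁻¹‖
      simpa [Function.comp] using h3
    exact squeeze_zero_norm
      (fun x => le_of_eq (by rw [norm_mul, norm_neg, norm_cexp_neg_mul])) h2
  have := integral_Ioi_of_hasDerivAt_of_tendsto hcont hder (integrableOn_cexp hc) htend
  rw [this]
  simp

lemma slit_bound {w : ℂ} (hw : w ∈ Complex.slitPlane) :
    ∃ δ : ℝ, 0 < δ ∧ ∀ t : ℝ, 0 ≤ t → δ ≤ ‖(t:ℂ) + w‖ := by
  rcases hw with h | h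
  · refine ⟨w.re, h, fun t ht => ?_⟩
    calc w.re ≤ ((t:ℂ) + w).re := by simp [Complex.add_re]; linarith
    _ ≤ ‖(t:ℂ) + w‖ := Complex.re_le_norm _
  · refine ⟨|w.im|, abs_pos.mpr h, fun t ht => ?_⟩
    calc |w.im| = |((t:ℂ) + w).im| := by simp [Complex.add_im]
    _ ≤ ‖(t:ℂ) + w‖ := Complex.abs_im_le_norm _

lemma preconn_slitPlane : IsPreconnected Complex.slitPlane := by
  have hA : IsPreconnected {z : ℂ | 0 < z.re} := (convex_halfSpace_re_gt 0).isPreconnected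
  have hB : IsPreconnected {z : ℂ | 0 < z.im} := (convex_halfSpace_im_gt 0).isPreconnected
  have hC : IsPreconnected {z : ℂ | z.im < 0} := (convex_halfSpace_im_lt 0).isPreconnected
  have hAB : IsPreconnected ({z : ℂ | 0 < z.re} ∪ {z : ℂ | 0 < z.im}) :=
    IsPreconnected.union (1 + Complex.I) (by simp) (by simp) hA hB
  have hAC : IsPreconnected ({z : ℂ | 0 < z.re} ∪ {z : ℂ | z.im < 0}) :=
    IsPreconnected.union (1 - Complex.I) (by simp) (by simp) hA hC
  have h := IsPreconnected.union 1 (by simp) (by simp) hAB hAC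
  have heq : Complex.slitPlane =
      ({z : ℂ | 0 < z.re} ∪ {z : ℂ | 0 < z.im}) ∪ ({z : ℂ | 0 < z.re} ∪ {z : ℂ | z.im < 0}) := by
    ext z
    simp only [Complex.mem_slitPlane_iff, Set.mem_union, Set.mem_setOf_eq]
    constructor
    · rintro (h | h)
      · exact Or.inl (Or.inl h)
      · rcases Ne.lt_or_gt h with h | h
        · exact Or.inr (Or.inr h)
        · exact Or.inl (Or.inr h)
    · rintro ((h | h) | (h | h))
      · exact Or.inl h
      · exact Or.inr h.ne'
      · exact Or.inl h
      · exact Or.inr h.ne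
  rw [heq]
  exact h


noncomputable def Q (α : ℝ) (n : ℕ) (t : ℝ) : ℝ := laguerreM α n t * t ^ α * Real.exp (-t)

noncomputable def g (α : ℝ) (n : ℕ) (w : ℂ) : ℂ :=
  ∫ t in Ioi (0:ℝ), ((Q α n t : ℝ) : ℂ) / ((t:ℂ) + w)

lemma integrableOn_Q {α : ℝ} (hα : -1 < α) (n : ℕ) : IntegrableOn (Q α n) (Ioi 0) := by
  have h := integrableOn_lag α hα n one_pos
  simp only [one_mul] at h
  exact h

lemma measurable_lag (α : ℝ) (n : ℕ) : Measurable (laguerreM α n) := by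
  have : laguerreM α n = fun t => ∑ k ∈ range (n+1), lagC α n k * t ^ k :=
    funext (laguerreM_eq_sum α n)
  rw [this]
  exact Finset.measurable_sum _ fun k _ => ((measurable_id.pow_const k).const_mul _)

lemma measurable_Q (α : ℝ) (n : ℕ) : Measurable (Q α n) :=
  ((measurable_lag α n).mul (by fun_prop : Measurable fun t : ℝ => t ^ α)).mul
    (Real.measurable_exp.comp measurable_neg)

lemma measurable_div_aux (α : ℝ) (n : ℕ) (w : ℂ) :
    Measurable (fun t : ℝ => ((Q α n t : ℝ) : ℂ) / ((t:ℂ) + w)) :=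
  (Complex.measurable_ofReal.comp (measurable_Q α n)).div
    (Complex.measurable_ofReal.add measurable_const)

lemma integrableOn_div {α : ℝ} (hα : -1 < α) (n : ℕ) {w : ℂ} (hw : w ∈ Complex.slitPlane) :
    IntegrableOn (fun t : ℝ => ((Q α n t : ℝ) : ℂ) / ((t:ℂ) + w)) (Ioi 0) := by
  obtain ⟨δ, hδ, hb⟩ := slit_bound hw
  apply Integrable.mono' (g := fun t => δ⁻¹ * |Q α n t|)
  · exact ((integrableOn_Q hα n).abs.const_mul _)
  · exact (measurable_div_aux α n w).aestronglyMeasurable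
  · filter_upwards [ae_restrict_mem measurableSet_Ioi] with t ht
    rw [Set.mem_Ioi] at ht
    rw [norm_div, Complex.norm_real, Real.norm_eq_abs]
    calc |Q α n t| / ‖(t:ℂ) + w‖ ≤ |Q α n t| / δ :=
      div_le_div_of_nonneg_left (abs_nonneg _) hδ (hb t ht.le)
    _ = δ⁻¹ * |Q α n t| := by rw [div_eq_inv_mul]

lemma g_differentiableOn (α : ℝ) (hα : -1 < α) (n : ℕ) :
    DifferentiableOn ℂ (g α n) Complex.slitPlane := by
  intro w₀ hw₀
  obtain ⟨δ, hδ, hb⟩ := slit_bound hw₀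
  have key : HasDerivAt (g α n)
      (∫ t in Ioi (0:ℝ), -(((Q α n t : ℝ) : ℂ) / (((t:ℂ) + w₀)^2))) w₀ := by
    have hball : ∀ w ∈ Metric.ball w₀ (δ/2), ∀ t : ℝ, 0 ≤ t →
        δ/2 ≤ ‖(t:ℂ) + w‖ := by
      intro w hw t ht
      have h1 : δ ≤ ‖(t:ℂ) + w₀‖ := hb t ht
      have h2 : ‖(t:ℂ) + w₀ - ((t:ℂ) + w)‖ < δ/2 := by
        simpa [Complex.dist_eq, dist_comm] using (Metric.mem_ball.mp hw)
      have h3 : ‖(t:ℂ) + w₀‖ - ‖(t:ℂ) + w‖ ≤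
          ‖(t:ℂ) + w₀ - ((t:ℂ) + w)‖ := by
        exact norm_sub_norm_le _ _
      linarith
    have := (hasDerivAt_integral_of_dominated_loc_of_deriv_le (Metric.ball_mem_nhds w₀ (half_pos hδ))
      (F := fun w (t:ℝ) => ((Q α n t : ℝ) : ℂ) / ((t:ℂ) + w))
      (F' := fun w (t:ℝ) => -(((Q α n t : ℝ) : ℂ) / (((t:ℂ) + w)^2)))
      (bound := fun t => (δ/2)⁻¹^2 * |Q α n t|)
      (Eventually.of_forall fun w => (measurable_div_aux α n w).aestronglyMeasurable)
      (integrableOn_div hα n hw₀)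
      ((((Complex.measurable_ofReal.comp (measurable_Q α n)).div
        ((Complex.measurable_ofReal.add measurable_const).pow_const 2)).neg).aestronglyMeasurable)
      ?_ (((integrableOn_Q hα n).abs.const_mul _)) ?_).2
    · exact this
    · filter_upwards [ae_restrict_mem measurableSet_Ioi] with t ht w hw
      rw [Set.mem_Ioi] at ht
      have h1 := hball w hw t ht.le
      rw [norm_neg, norm_div, Complex.norm_real, Real.norm_eq_abs,
        norm_pow]
      calc |Q α n t| / ‖(t:ℂ) + w‖ ^ 2 ≤ |Q α n t| / (δ/2)^2 := by
            apply div_le_div_of_nonneg_left (abs_nonneg _) (by positivity)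
            exact pow_le_pow_left₀ (by positivity) h1 2
      _ = (δ/2)⁻¹^2 * |Q α n t| := by rw [div_eq_inv_mul, inv_pow]
    · filter_upwards [ae_restrict_mem measurableSet_Ioi] with t ht w hw
      rw [Set.mem_Ioi] at ht
      have hne : (t:ℂ) + w ≠ 0 := by
        intro h
        have := hball w hw t ht.le
        rw [h] at this
        simp at this
        linarith
      have h2 : HasDerivAt (fun w : ℂ => (t:ℂ) + w) 1 w := by
        simpa using (hasDerivAt_id w).const_add (t:ℂ)
      have h3 := (h2.inv hne).const_mul ((Q α n t : ℝ) : ℂ)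
      have h4 : ((Q α n t : ℝ) : ℂ) * (-1 / ((t:ℂ) + w)^2)
          = -(((Q α n t : ℝ) : ℂ) / (((t:ℂ) + w)^2)) := by ring
      rw [h4] at h3
      apply h3.congr_of_eventuallyEq
      filter_upwards with u using by rw [div_eq_mul_inv]; rfl
  exact key.differentiableAt.differentiableWithinAt

lemma g_analytic (α : ℝ) (hα : -1 < α) (n : ℕ) :
    AnalyticOnNhd ℂ (g α n) Complex.slitPlane :=
  (g_differentiableOn α hα n).analyticOnNhd Complex.isOpen_slitPlane


lemma g_eq_integral {α : ℝ} (hα : -1 < α) (n : ℕ) {w : ℂ} (hw : 0 < w.re) :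
    g α n w = ((-1:ℂ)^n * (Real.Gamma (α + n + 1) : ℂ)) *
      ∫ s in Ioi (0:ℝ), Complex.exp (-w * s) * (s:ℂ) ^ (((n:ℂ) + 1) - 1) *
        (1 + (s:ℂ)) ^ ((1 - (α:ℂ)) - ((n:ℂ) + 1) - 1) := by
  set F : ℝ → ℝ → ℂ := fun t s => ((Q α n t : ℝ) : ℂ) * Complex.exp (-(((t:ℂ) + w) * s))
    with hF
  have hre : ∀ t : ℝ, 0 < t → 0 < ((t:ℂ) + w).re := by
    intro t ht
    simp only [Complex.add_re, Complex.ofReal_re]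
    linarith
  -- step 1 : replace 1/(t+w) by an integral
  have step1 : g α n w = ∫ t in Ioi (0:ℝ), ∫ s in Ioi (0:ℝ), F t s := by
    unfold g
    apply setIntegral_congr_fun measurableSet_Ioi
    intro t ht
    rw [Set.mem_Ioi] at ht
    simp only [hF]
    rw [MeasureTheory.integral_const_mul, integral_cexp (hre t ht), div_eq_mul_inv]
  -- step 2 : integrability on the product
  have hFmeas : AEStronglyMeasurable (fun p : ℝ × ℝ => F p.1 p.2)
      ((volume.restrict (Ioi 0)).prod (volume.restrict (Ioi 0))) := by
    apply Measurable.aestronglyMeasurable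
    apply Measurable.mul
    · exact Complex.measurable_ofReal.comp ((measurable_Q α n).comp measurable_fst)
    · apply Complex.measurable_exp.comp
      apply Measurable.neg
      exact ((Complex.measurable_ofReal.comp measurable_fst).add measurable_const).mul
        (Complex.measurable_ofReal.comp measurable_snd)
  have step2 : Integrable (Function.uncurry F)
      ((volume.restrict (Ioi 0)).prod (volume.restrict (Ioi 0))) := by
    refine (integrable_prod_iff hFmeas).mpr ⟨?_, ?_⟩
    · filter_upwards [ae_restrict_mem measurableSet_Ioi] with t ht
      rw [Set.mem_Ioi] at ht
      exact (integrableOn_cexp (hre t ht)).const_mul _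
    · have hnorm : ∀ t ∈ Ioi (0:ℝ),
          (∫ s in Ioi (0:ℝ), ‖F t s‖) = |Q α n t| * (t + w.re)⁻¹ := by
        intro t ht
        rw [Set.mem_Ioi] at ht
        have : ∀ s : ℝ, ‖F t s‖ = |Q α n t| * Real.exp (-((t + w.re) * s)) := by
          intro s
          rw [hF]
          simp only []
          rw [norm_mul, Complex.norm_real, Real.norm_eq_abs, norm_cexp_neg_mul]
          simp [Complex.add_re]
        simp_rw [this]
        rw [MeasureTheory.integral_const_mul, integral_exp_neg_mul_real (by linarith)]
      apply Integrable.mono' (g := fun t => (w.re)⁻¹ * |Q α n t|)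
      · exact (integrableOn_Q hα n).abs.const_mul _
      · exact hFmeas.norm.integral_prod_right'
      · filter_upwards [ae_restrict_mem measurableSet_Ioi] with t ht
        have ht' := ht
        rw [Set.mem_Ioi] at ht'
        rw [Real.norm_eq_abs, _root_.abs_of_nonneg (integral_nonneg fun s => norm_nonneg _),
          hnorm t ht]
        have h2 : (t + w.re)⁻¹ ≤ (w.re)⁻¹ := by
          apply inv_anti₀ hw
          linarith
        calc |Q α n t| * (t + w.re)⁻¹ ≤ |Q α n t| * (w.re)⁻¹ :=
          mul_le_mul_of_nonneg_left h2 (abs_nonneg _)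
        _ = (w.re)⁻¹ * |Q α n t| := mul_comm _ _
  -- step 3 : swap
  have step3 : (∫ t in Ioi (0:ℝ), ∫ s in Ioi (0:ℝ), F t s)
      = ∫ s in Ioi (0:ℝ), ∫ t in Ioi (0:ℝ), F t s :=
    MeasureTheory.integral_integral_swap step2
  -- step 4 : inner integral
  have step4 : ∀ s ∈ Ioi (0:ℝ), (∫ t in Ioi (0:ℝ), F t s)
      = Complex.exp (-w * s) *
        (((-1:ℝ)^n * Real.Gamma (α + n + 1) * (1 + s - 1)^n / (1+s) ^ (α + (n:ℝ) + 1) : ℝ) : ℂ) := by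
    intro s hs
    rw [Set.mem_Ioi] at hs
    have h1 : ∀ t ∈ Ioi (0:ℝ), F t s = Complex.exp (-w * s) *
        ((laguerreM α n t * t ^ α * Real.exp (-((1+s) * t)) : ℝ) : ℂ) := by
      intro t _
      have hexp : Real.exp (-t) * Real.exp (-(t * s)) = Real.exp (-((1+s) * t)) := by
        rw [← Real.exp_add]
        ring_nf
      calc F t s = Complex.exp (-w * s) *
          ((laguerreM α n t * t ^ α * (Real.exp (-t) * Real.exp (-(t * s))) : ℝ) : ℂ) := by
            rw [hF]
            simp only []
            rw [show (-(((t:ℂ) + w) * s)) = (-w * s) + ((-(t * s) : ℝ) : ℂ) by push_cast; ring,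
              Complex.exp_add, ← Complex.ofReal_exp]
            unfold Q
            push_cast
            ring
      _ = _ := by rw [hexp]
    rw [setIntegral_congr_fun measurableSet_Ioi h1, MeasureTheory.integral_const_mul]
    congr 1
    rw [show (∫ t in Ioi (0:ℝ), ((laguerreM α n t * t ^ α * Real.exp (-((1+s) * t)) : ℝ) : ℂ))
        = ((∫ t in Ioi (0:ℝ), laguerreM α n t * t ^ α * Real.exp (-((1+s) * t)) : ℝ) : ℂ)
      from integral_ofReal, key_integral α hα n (show (0:ℝ) < 1 + s by linarith)]
  rw [step1, step3, setIntegral_congr_fun measurableSet_Ioi step4, ← MeasureTheory.integral_const_mul]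
  -- step 5 : pointwise identification of the integrand
  apply setIntegral_congr_fun measurableSet_Ioi
  intro s hs
  rw [Set.mem_Ioi] at hs
  simp only []
  have e1 : (s:ℂ) ^ (((n:ℂ) + 1) - 1) = ((s ^ (n:ℕ) : ℝ) : ℂ) := by
    rw [show ((n:ℂ) + 1) - 1 = ((n:ℕ) : ℂ) by ring, Complex.cpow_natCast]
    push_cast
    ring
  have e2 : (1 + (s:ℂ)) ^ ((1 - (α:ℂ)) - ((n:ℂ) + 1) - 1)
      = (((1+s) ^ (α + (n:ℝ) + 1) : ℝ)⁻¹ : ℂ) := by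
    rw [show (1 + (s:ℂ)) = (((1+s : ℝ)) : ℂ) by push_cast; ring,
      show (1 - (α:ℂ)) - ((n:ℂ) + 1) - 1 = ((-(α + (n:ℝ) + 1) : ℝ) : ℂ) by push_cast; ring,
      ← Complex.ofReal_cpow (by linarith : (0:ℝ) ≤ 1 + s),
      Real.rpow_neg (by linarith : (0:ℝ) ≤ 1 + s)]
    push_cast
    ring
  rw [e1, e2]
  have h3 : ((1+s) ^ (α + (n:ℝ) + 1) : ℝ) ≠ 0 :=
    (Real.rpow_pos_of_pos (by linarith) _).ne'
  rw [show (1 : ℝ) + s - 1 = s by ring]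
  push_cast
  field_simp

end FhatAux



/-- Kummer confluent hypergeometric function of the second kind `U(a,b,·)`:
the analytic function on the slit plane `|arg w| < π` agreeing, for `Re w > 0`,
with the integral `(1/Γ(a)) ∫₀^∞ e^{−wt} t^{a−1}(1+t)^{b−a−1} dt`. -/
noncomputable def KummerU (a b : ℂ) : ℂ → ℂ :=
  Classical.epsilon fun U : ℂ → ℂ =>
    (∀ w : ℂ, 0 < w.re →
      U w = (Complex.Gamma a)⁻¹ * ∫ t in Set.Ioi (0 : ℝ),
        Complex.exp (-w * t) * (t : ℂ) ^ (a - 1) * (1 + (t : ℂ)) ^ (b - a - 1)) ∧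
    AnalyticOnNhd ℂ U Complex.slitPlane

/-- Laguerre function of the second kind
`F̂_n^α(z) = ∫₀^∞ L̂_n^α(t) t^α e^{−t}/(t−z) dt`. -/
noncomputable def Fhat (α : ℝ) (n : ℕ) (z : ℂ) : ℂ :=
  ∫ t in Set.Ioi (0 : ℝ),
    (laguerreM α n t : ℂ) * (t : ℂ) ^ (α : ℂ) * Complex.exp (-(t : ℂ)) / ((t : ℂ) - z)

namespace FhatAux

noncomputable def U0 (α : ℝ) (n : ℕ) (w : ℂ) : ℂ :=
  ((Complex.Gamma ((n:ℂ) + 1))⁻¹ * ((-1:ℂ)^n * (Real.Gamma (α + (n:ℝ) + 1) : ℂ))⁻¹) * g α n w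

lemma U0_prop {α : ℝ} (hα : -1 < α) (n : ℕ) :
    (∀ w : ℂ, 0 < w.re →
      U0 α n w = (Complex.Gamma ((n:ℂ) + 1))⁻¹ * ∫ t in Set.Ioi (0 : ℝ),
        Complex.exp (-w * t) * (t : ℂ) ^ (((n:ℂ) + 1) - 1) *
          (1 + (t : ℂ)) ^ ((1 - (α:ℂ)) - ((n:ℂ) + 1) - 1)) ∧
    AnalyticOnNhd ℂ (U0 α n) Complex.slitPlane := by
  have hΓr : (0:ℝ) < Real.Gamma (α + (n:ℝ) + 1) :=
    Real.Gamma_pos_of_pos (by have : (0:ℝ) ≤ n := Nat.cast_nonneg n; linarith)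
  have hc₀ : ((-1:ℂ)^n * (Real.Gamma (α + (n:ℝ) + 1) : ℂ)) ≠ 0 :=
    mul_ne_zero (pow_ne_zero _ (by norm_num)) (by exact_mod_cast hΓr.ne')
  constructor
  · intro w hw
    unfold U0
    rw [g_eq_integral hα n hw, mul_assoc ((Complex.Gamma ((n:ℂ) + 1))⁻¹),
      inv_mul_cancel_left₀ hc₀]
  · exact fun w hw => ((analyticAt_const).mul ((g_analytic α hα n) w hw))

end FhatAux


/-- `F̂_n^α(z) = (−1)^n n! Γ(n+α+1) U(n+1, 1−α, z e^{±πi})`, with plus sign if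
`−π < arg z ≤ 0` and minus sign if `0 < arg z ≤ π`. -/
theorem Fhat_eq_KummerU (α : ℝ) (hα : -1 < α) (n : ℕ) (z : ℂ)
    (hz : ¬(z.im = 0 ∧ 0 ≤ z.re)) :
    Fhat α n z =
      (-1 : ℂ) ^ n * n.factorial * Complex.Gamma ((n : ℂ) + α + 1) *
        KummerU ((n : ℂ) + 1) (1 - (α : ℂ))
          (if z.arg ≤ 0 then z * Complex.exp ((Real.pi : ℂ) * Complex.I)
           else z * Complex.exp (-(Real.pi : ℂ) * Complex.I)) := by
  classical
  have hΓr : (0:ℝ) < Real.Gamma (α + (n:ℝ) + 1) :=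
    Real.Gamma_pos_of_pos (by have : (0:ℝ) ≤ n := Nat.cast_nonneg n; linarith)
  -- the branch value is `-z`
  have hif : (if z.arg ≤ 0 then z * Complex.exp ((Real.pi : ℂ) * Complex.I)
      else z * Complex.exp (-(Real.pi : ℂ) * Complex.I)) = -z := by
    have h1 : Complex.exp ((Real.pi : ℂ) * Complex.I) = -1 := Complex.exp_pi_mul_I
    have h2 : Complex.exp (-((Real.pi : ℂ) * Complex.I)) = -1 := by
      rw [Complex.exp_neg, h1]
      norm_num
    split <;> simp [h1, h2]
  rw [hif]
  have hmz : -z ∈ Complex.slitPlane := by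
    rcases eq_or_ne z.im 0 with h | h
    · left
      have hre : z.re < 0 := by
        by_contra hre
        exact hz ⟨h, not_lt.mp hre⟩
      simp only [Complex.neg_re]
      linarith
    · right
      simpa using h
  -- Fhat equals g at -z
  have h1 : Fhat α n z = FhatAux.g α n (-z) := by
    unfold Fhat FhatAux.g FhatAux.Q
    apply MeasureTheory.setIntegral_congr_fun measurableSet_Ioi
    intro t ht
    rw [Set.mem_Ioi] at ht
    simp only []
    rw [sub_eq_add_neg]
    congr 1
    rw [Complex.ofReal_mul, Complex.ofReal_mul, Complex.ofReal_cpow ht.le,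
      Complex.ofReal_exp, Complex.ofReal_neg]
  -- the epsilon specification
  have hex : ∃ U : ℂ → ℂ,
      (∀ w : ℂ, 0 < w.re →
        U w = (Complex.Gamma ((n:ℂ) + 1))⁻¹ * ∫ t in Set.Ioi (0 : ℝ),
          Complex.exp (-w * t) * (t : ℂ) ^ (((n:ℂ) + 1) - 1) *
            (1 + (t : ℂ)) ^ ((1 - (α:ℂ)) - ((n:ℂ) + 1) - 1)) ∧
      AnalyticOnNhd ℂ U Complex.slitPlane := ⟨FhatAux.U0 α n, FhatAux.U0_prop hα n⟩
  have hK : (∀ w : ℂ, 0 < w.re →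
      KummerU ((n:ℂ) + 1) (1 - (α:ℂ)) w
        = (Complex.Gamma ((n:ℂ) + 1))⁻¹ * ∫ t in Set.Ioi (0 : ℝ),
          Complex.exp (-w * t) * (t : ℂ) ^ (((n:ℂ) + 1) - 1) *
            (1 + (t : ℂ)) ^ ((1 - (α:ℂ)) - ((n:ℂ) + 1) - 1)) ∧
      AnalyticOnNhd ℂ (KummerU ((n:ℂ) + 1) (1 - (α:ℂ))) Complex.slitPlane := by
    unfold KummerU
    exact Classical.epsilon_spec hex
  -- identity theorem
  have hev : KummerU ((n:ℂ) + 1) (1 - (α:ℂ)) =ᶠ[nhds 1] FhatAux.U0 α n := by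
    have hopen : IsOpen {w : ℂ | 0 < w.re} := isOpen_lt continuous_const Complex.continuous_re
    filter_upwards [hopen.mem_nhds (show 0 < (1:ℂ).re by norm_num)] with w hw
    exact (hK.1 w hw).trans ((FhatAux.U0_prop hα n).1 w hw).symm
  have heqOn : Set.EqOn (KummerU ((n:ℂ) + 1) (1 - (α:ℂ))) (FhatAux.U0 α n)
      Complex.slitPlane :=
    hK.2.eqOn_of_preconnected_of_eventuallyEq ((FhatAux.U0_prop hα n).2)
      FhatAux.preconn_slitPlane Complex.one_mem_slitPlane hev
  rw [h1, heqOn hmz]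
  unfold FhatAux.U0
  rw [Complex.Gamma_nat_eq_factorial,
    show ((n:ℂ) + α + 1) = ((α + (n:ℝ) + 1 : ℝ) : ℂ) by push_cast; ring,
    Complex.Gamma_ofReal]
  have h2 : ((n.factorial : ℂ)) ≠ 0 := Nat.cast_ne_zero.mpr (Nat.factorial_ne_zero n)
  have h3 : ((Real.Gamma (α + (n:ℝ) + 1) : ℝ) : ℂ) ≠ 0 := by exact_mod_cast hΓr.ne'
  field_simp
end

section
/- Suppose for each n, L̂_{n-1}(z)/L̂_n(z) = −(1/n)(1 − √(−z/n) + (1−2z−2α)/(4n) + O(n^{−3/2})) and Λ_n = n + σ√(−cn) + (2α−2c−1)/4 + O(n^{−1/2}) as n → ∞, with σ ∈ {+1,−1}, z ∉ [0,∞), c < 0. Then Q_n(z)/L̂_n(z) := 1 + Λ_n·L̂_{n-1}(z)/L̂_n(z) = (√(−z) − σ√(−c))/√n − (√(−z) − σ√(−c))²/(2n) + O(n^{−3/2}) as n → ∞. -/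
open Asymptotics Filter

private lemma key_id' (w γ s δ : ℂ) (hs : s ≠ 0) :
    1 + (s^2 + γ*s + ((w^2+γ^2)/2 - δ)) * (-(1/s^2) * (1 - w/s + δ/s^2))
      - ((w - γ)/s - (w-γ)^2/(2*s^2))
    = -(γ*δ - ((w^2+γ^2)/2 - δ)*w)/(s^2*s) - ((w^2+γ^2)/2 - δ)*δ/(s^2)^2 := by
  have h1 : s^2 * s⁻¹^2 = 1 := by rw [← mul_pow, mul_inv_cancel₀ hs, one_pow]
  have h2 : s * s⁻¹^2 = s⁻¹ := by rw [pow_two, ← mul_assoc, mul_inv_cancel₀ hs, one_mul]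
  linear_combination (-(1 - w*s⁻¹ + δ*s⁻¹^2)) * h1 + (-(1 - w*s⁻¹ + δ*s⁻¹^2))*γ*h2

private lemma ofReal_mul_cpow' {r : ℝ} (hr : 0 < r) {x : ℂ} (hx : x ≠ 0) (s : ℂ) :
    ((r : ℂ) * x) ^ s = (r : ℂ) ^ s * x ^ s := by
  have hr' : (r : ℂ) ≠ 0 := Complex.ofReal_ne_zero.mpr hr.ne'
  rw [Complex.cpow_def_of_ne_zero (mul_ne_zero hr' hx),
      Complex.cpow_def_of_ne_zero hr', Complex.cpow_def_of_ne_zero hx,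
      Complex.log_ofReal_mul hr hx, ← Complex.ofReal_log hr.le, add_mul, Complex.exp_add]

private lemma nat_rpow_isBigO' {a b : ℝ} (h : a ≤ b) :
    (fun n : ℕ => (n:ℝ)^a) =O[atTop] fun n : ℕ => (n:ℝ)^b := by
  apply Asymptotics.IsBigO.of_bound 1
  filter_upwards [eventually_ge_atTop 1] with n hn
  have h1 : (1:ℝ) ≤ (n:ℝ) := by exact_mod_cast hn
  have h0 : (0:ℝ) ≤ (n:ℝ) := by linarith
  rw [one_mul, Real.norm_eq_abs, Real.norm_eq_abs,
    abs_of_nonneg (Real.rpow_nonneg h0 _), abs_of_nonneg (Real.rpow_nonneg h0 _)]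
  exact Real.rpow_le_rpow_of_exponent_le h1 h

private lemma nat_rpow_mul' (a b : ℝ) :
    (fun n : ℕ => (n:ℝ)^a * (n:ℝ)^b) =ᶠ[atTop] fun n : ℕ => (n:ℝ)^(a+b) := by
  filter_upwards [eventually_ge_atTop 1] with n hn
  have h0 : (0:ℝ) < (n:ℝ) := by exact_mod_cast hn
  rw [Real.rpow_add h0]

private lemma mul_rpow_bigO' {f g : ℕ → ℂ} {a b c : ℝ}
    (hf : f =O[atTop] fun n : ℕ => (n:ℝ)^a)
    (hg : g =O[atTop] fun n : ℕ => (n:ℝ)^b) (h : a + b = c) :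
    (fun n => f n * g n) =O[atTop] fun n : ℕ => (n:ℝ)^c := by
  subst h
  exact (hf.mul hg).trans (nat_rpow_mul' a b).isBigO

/-- Asymptotic-manipulation lemma: from the ratio asymptotics of consecutive
monic Laguerre polynomials,
`L̂_{n-1}(z)/L̂_n(z) = −(1/n)(1 − √(−z/n) + (1−2z−2α)/(4n) + O(n^{−3/2}))`,
and the connection-coefficient asymptotics
`Λ_n = n + σ√(−cn) + (2α−2c−1)/4 + O(n^{−1/2})`, one gets
`1 + Λ_n L̂_{n-1}(z)/L̂_n(z)
  = (√(−z) − σ√(−c))/√n − (√(−z) − σ√(−c))²/(2n) + O(n^{−3/2})`. -/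
theorem geronimus_relative_asymptotics
    (α c σ : ℝ) (hc : c < 0) (hσ : σ = 1 ∨ σ = -1)
    (z : ℂ) (hz : ¬(z.im = 0 ∧ 0 ≤ z.re))
    (Lratio Λ : ℕ → ℂ)
    (hL : (fun n : ℕ =>
        Lratio n + (1 / (n : ℂ)) *
          (1 - (-z / (n : ℂ)) ^ ((1 : ℂ) / 2) +
            (1 - 2 * z - 2 * (α : ℂ)) / (4 * (n : ℂ))))
      =O[atTop] fun n : ℕ => (n : ℝ) ^ (-(5 : ℝ) / 2))
    (hΛ : (fun n : ℕ =>
        Λ n - ((n : ℂ) + (σ : ℂ) * (Real.sqrt (-c * n) : ℂ) +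
          (2 * (α : ℂ) - 2 * (c : ℂ) - 1) / 4))
      =O[atTop] fun n : ℕ => (n : ℝ) ^ (-(1 : ℝ) / 2)) :
    (fun n : ℕ =>
        (1 + Λ n * Lratio n) -
          (((-z) ^ ((1 : ℂ) / 2) - (σ : ℂ) * (Real.sqrt (-c) : ℂ)) / (Real.sqrt n : ℂ) -
            ((-z) ^ ((1 : ℂ) / 2) - (σ : ℂ) * (Real.sqrt (-c) : ℂ)) ^ 2 / (2 * (n : ℂ))))
      =O[atTop] fun n : ℕ => (n : ℝ) ^ (-(3 : ℝ) / 2) := by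
  have hz0 : z ≠ 0 := by
    rintro rfl
    exact hz (by simp)
  set w : ℂ := (-z) ^ ((1 : ℂ) / 2) with hw
  set γ : ℂ := (σ : ℂ) * (Real.sqrt (-c) : ℂ) with hγ
  set β : ℂ := (2 * (α : ℂ) - 2 * (c : ℂ) - 1) / 4 with hβ
  set δ : ℂ := (1 - 2 * z - 2 * (α : ℂ)) / 4 with hδ
  have hσ2 : (σ : ℂ) ^ 2 = 1 := by rcases hσ with h | h <;> rw [h] <;> norm_num
  have hw2 : w ^ 2 = -z := by
    have h : ((1 : ℂ) / 2) = (((2 : ℕ) : ℂ))⁻¹ := by norm_num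
    rw [hw, h]
    exact Complex.cpow_nat_inv_pow (-z) two_ne_zero
  have hγ2 : γ ^ 2 = ((-c : ℝ) : ℂ) := by
    have hs : ((Real.sqrt (-c) : ℝ) : ℂ) ^ 2 = ((-c : ℝ) : ℂ) := by
      rw [← Complex.ofReal_pow, Real.sq_sqrt (by linarith : (0:ℝ) ≤ -c)]
    rw [hγ, mul_pow, hσ2, one_mul, hs]
  have hβδ : β = (w ^ 2 + γ ^ 2) / 2 - δ := by
    rw [hw2, hγ2, hβ, hδ]
    push_cast
    ring
  -- the "model" main terms
  set M : ℕ → ℂ := fun n => (n : ℂ) + γ * (Real.sqrt n : ℂ) + β with hM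
  set R : ℕ → ℂ := fun n => -(1 / (n : ℂ)) * (1 - w / (Real.sqrt n : ℂ) + δ / (n : ℂ)) with hR
  -- splitting of the principal square root
  have hcpow : ∀ n : ℕ, 1 ≤ n →
      (-z / (n : ℂ)) ^ ((1 : ℂ) / 2) = w / (Real.sqrt n : ℂ) := by
    intro n hn
    have hn0 : (0:ℝ) < (n:ℝ) := by exact_mod_cast hn
    have h1 : -z / (n : ℂ) = (((n:ℝ)⁻¹ : ℝ) : ℂ) * (-z) := by
      push_cast
      ring
    have h2 : ((((n:ℝ)⁻¹ : ℝ)) : ℂ) ^ ((1 : ℂ) / 2)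
        = (((Real.sqrt n)⁻¹ : ℝ) : ℂ) := by
      have h3 : (((n:ℝ)⁻¹ ^ ((1:ℝ)/2) : ℝ) : ℂ) = ((((n:ℝ)⁻¹ : ℝ)) : ℂ) ^ (((1:ℝ)/2 : ℝ) : ℂ) :=
        Complex.ofReal_cpow (by positivity) _
      have h4 : (((1:ℝ)/2 : ℝ) : ℂ) = (1 : ℂ) / 2 := by push_cast; ring
      rw [← h4, ← h3, Real.inv_rpow hn0.le, ← Real.sqrt_eq_rpow]
    rw [h1, ofReal_mul_cpow' (by positivity) (neg_ne_zero.mpr hz0), h2, hw]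
    push_cast
    ring
  -- hL rephrased
  have hLR : (fun n : ℕ => Lratio n - R n) =O[atTop] fun n : ℕ => (n:ℝ) ^ (-(5:ℝ)/2) := by
    apply hL.congr' _ EventuallyEq.rfl
    filter_upwards [eventually_ge_atTop 1] with n hn
    rw [hcpow n hn, hR, hδ]
    ring
  -- hΛ rephrased
  have hΛM : (fun n : ℕ => Λ n - M n) =O[atTop] fun n : ℕ => (n:ℝ) ^ (-(1:ℝ)/2) := by
    apply hΛ.congr' _ EventuallyEq.rfl
    apply Eventually.of_forall
    intro n
    simp only [hM, hγ, Real.sqrt_mul (by linarith : (0:ℝ) ≤ -c)]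
    push_cast
    ring
  -- M is O(n)
  have hMO : M =O[atTop] fun n : ℕ => (n:ℝ) ^ (1:ℝ) := by
    apply Asymptotics.IsBigO.of_bound (1 + ‖γ‖ + ‖β‖)
    filter_upwards [eventually_ge_atTop 1] with n hn
    have h1 : (1:ℝ) ≤ (n:ℝ) := by exact_mod_cast hn
    have h0 : (0:ℝ) ≤ (n:ℝ) := by linarith
    have hsq : Real.sqrt n ≤ (n:ℝ) := by
      rw [Real.sqrt_le_left h0]
      nlinarith
    have hb : ‖M n‖ ≤ ‖(n:ℂ)‖ + ‖γ * ((Real.sqrt n : ℝ) : ℂ)‖ + ‖β‖ := by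
      rw [hM]
      exact norm_add₃_le
    rw [Real.norm_eq_abs, abs_of_nonneg (Real.rpow_nonneg h0 _), Real.rpow_one]
    have h2 : ‖(n:ℂ)‖ = (n:ℝ) := by simp
    have h3 : ‖γ * ((Real.sqrt n : ℝ) : ℂ)‖ = ‖γ‖ * Real.sqrt n := by
      rw [norm_mul, Complex.norm_real, Real.norm_eq_abs, abs_of_nonneg (Real.sqrt_nonneg _)]
    have h4 : ‖γ‖ * Real.sqrt n ≤ ‖γ‖ * (n:ℝ) :=
      mul_le_mul_of_nonneg_left hsq (norm_nonneg _)
    have h5 : ‖β‖ ≤ ‖β‖ * (n:ℝ) := le_mul_of_one_le_right (norm_nonneg _) h1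
    calc ‖M n‖ ≤ ‖(n:ℂ)‖ + ‖γ * ((Real.sqrt n : ℝ) : ℂ)‖ + ‖β‖ := hb
      _ ≤ (n:ℝ) + ‖γ‖ * (n:ℝ) + ‖β‖ * (n:ℝ) := by rw [h2, h3]; linarith
      _ = (1 + ‖γ‖ + ‖β‖) * (n:ℝ) := by ring
  -- R is O(1/n)
  have hRO : R =O[atTop] fun n : ℕ => (n:ℝ) ^ (-(1:ℝ)) := by
    apply Asymptotics.IsBigO.of_bound (1 + ‖w‖ + ‖δ‖)
    filter_upwards [eventually_ge_atTop 1] with n hn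
    have h1 : (1:ℝ) ≤ (n:ℝ) := by exact_mod_cast hn
    have h0 : (0:ℝ) < (n:ℝ) := by linarith
    have hs1 : (1:ℝ) ≤ Real.sqrt n := Real.one_le_sqrt.mpr h1
    rw [Real.norm_eq_abs, abs_of_nonneg (Real.rpow_nonneg h0.le _), Real.rpow_neg_one]
    have h2 : ‖R n‖ = ‖(n:ℂ)‖⁻¹ * ‖1 - w / ((Real.sqrt n : ℝ) : ℂ) + δ / (n:ℂ)‖ := by
      rw [hR]
      rw [norm_mul, norm_neg, norm_div, norm_one]
      ring_nf
    have h3 : ‖(1:ℂ) - w / ((Real.sqrt n : ℝ) : ℂ) + δ / (n:ℂ)‖ ≤ 1 + ‖w‖ + ‖δ‖ := by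
      have hb : ‖(1:ℂ) - w / ((Real.sqrt n : ℝ) : ℂ) + δ / (n:ℂ)‖
          ≤ ‖(1:ℂ)‖ + ‖w / ((Real.sqrt n : ℝ) : ℂ)‖ + ‖δ / (n:ℂ)‖ := by
        calc ‖(1:ℂ) - w / ((Real.sqrt n : ℝ) : ℂ) + δ / (n:ℂ)‖
            ≤ ‖(1:ℂ) - w / ((Real.sqrt n : ℝ) : ℂ)‖ + ‖δ / (n:ℂ)‖ := norm_add_le _ _
          _ ≤ ‖(1:ℂ)‖ + ‖w / ((Real.sqrt n : ℝ) : ℂ)‖ + ‖δ / (n:ℂ)‖ := by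
              have := norm_sub_le (1:ℂ) (w / ((Real.sqrt n : ℝ) : ℂ))
              linarith
      have hw' : ‖w / ((Real.sqrt n : ℝ) : ℂ)‖ ≤ ‖w‖ := by
        rw [norm_div, Complex.norm_real, Real.norm_eq_abs, abs_of_nonneg (Real.sqrt_nonneg _)]
        exact div_le_self (norm_nonneg _) hs1
      have hδ' : ‖δ / (n:ℂ)‖ ≤ ‖δ‖ := by
        rw [norm_div]
        have : ‖(n:ℂ)‖ = (n:ℝ) := by simp
        rw [this]
        exact div_le_self (norm_nonneg _) h1
      simp only [norm_one] at hb
      linarith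
    have h4 : ‖(n:ℂ)‖⁻¹ = (n:ℝ)⁻¹ := by simp
    rw [h2, h4]
    rw [mul_comm]
    apply mul_le_mul_of_nonneg_right h3 (by positivity)
  -- Lratio is O(1/n)
  have hLrO : Lratio =O[atTop] fun n : ℕ => (n:ℝ) ^ (-(1:ℝ)) := by
    have h := (hLR.trans (nat_rpow_isBigO' (by norm_num : -(5:ℝ)/2 ≤ -(1:ℝ)))).add hRO
    exact h.congr_left fun n => by ring
  -- the exact main-term computation
  have hE1 : (fun n : ℕ => 1 + M n * R n -
      ((w - γ) / (Real.sqrt n : ℂ) - (w - γ)^2 / (2 * (n:ℂ))))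
      =O[atTop] fun n : ℕ => (n:ℝ) ^ (-(3:ℝ)/2) := by
    have hEa : (fun n : ℕ => -(γ*δ - β*w) / ((n:ℂ) * ((Real.sqrt n : ℝ) : ℂ)))
        =O[atTop] fun n : ℕ => (n:ℝ) ^ (-(3:ℝ)/2) := by
      apply Asymptotics.IsBigO.of_bound ‖γ*δ - β*w‖
      filter_upwards [eventually_ge_atTop 1] with n hn
      have h1 : (1:ℝ) ≤ (n:ℝ) := by exact_mod_cast hn
      have h0 : (0:ℝ) < (n:ℝ) := by linarith
      have hr : (n:ℝ) ^ (-(3:ℝ)/2) = ((n:ℝ) * Real.sqrt n)⁻¹ := by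
        rw [show (-(3:ℝ)/2) = -((3:ℝ)/2) by norm_num, Real.rpow_neg h0.le,
          show ((3:ℝ)/2) = 1 + 1/2 by norm_num, Real.rpow_add h0, Real.rpow_one,
          ← Real.sqrt_eq_rpow]
      rw [Real.norm_eq_abs, abs_of_nonneg (Real.rpow_nonneg h0.le _), hr, norm_div, norm_neg]
      have h2 : ‖(n:ℂ) * ((Real.sqrt n : ℝ) : ℂ)‖ = (n:ℝ) * Real.sqrt n := by
        rw [norm_mul, Complex.norm_real, Real.norm_eq_abs,
          abs_of_nonneg (Real.sqrt_nonneg _)]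
        simp
      rw [h2, div_eq_mul_inv]
    have hEb : (fun n : ℕ => -(β*δ) / ((n:ℂ)^2))
        =O[atTop] fun n : ℕ => (n:ℝ) ^ (-(3:ℝ)/2) := by
      apply Asymptotics.IsBigO.trans _ (nat_rpow_isBigO' (by norm_num : -(2:ℝ) ≤ -(3:ℝ)/2))
      apply Asymptotics.IsBigO.of_bound ‖β*δ‖
      filter_upwards [eventually_ge_atTop 1] with n hn
      have h1 : (1:ℝ) ≤ (n:ℝ) := by exact_mod_cast hn
      have h0 : (0:ℝ) < (n:ℝ) := by linarith
      have hr : (n:ℝ) ^ (-(2:ℝ)) = ((n:ℝ)^2)⁻¹ := by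
        rw [Real.rpow_neg h0.le, show ((2:ℝ)) = ((2:ℕ):ℝ) by norm_num, Real.rpow_natCast]
      rw [Real.norm_eq_abs, abs_of_nonneg (Real.rpow_nonneg h0.le _), hr, norm_div, norm_neg]
      have h2 : ‖(n:ℂ)^2‖ = (n:ℝ)^2 := by
        rw [norm_pow]
        simp
      rw [h2, div_eq_mul_inv]
    apply (hEa.add hEb).congr' _ EventuallyEq.rfl
    filter_upwards [eventually_ge_atTop 1] with n hn
    have h1 : (1:ℝ) ≤ (n:ℝ) := by exact_mod_cast hn
    have h0 : (0:ℝ) < (n:ℝ) := by linarith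
    have hsne : ((Real.sqrt n : ℝ) : ℂ) ≠ 0 := by
      rw [Complex.ofReal_ne_zero]
      positivity
    have hs2 : ((Real.sqrt n : ℝ) : ℂ) ^ 2 = (n:ℂ) := by
      rw [← Complex.ofReal_pow, Real.sq_sqrt h0.le]
      norm_cast
    have key := key_id' w γ ((Real.sqrt n : ℝ) : ℂ) δ hsne
    rw [hs2, ← hβδ] at key
    simp only [hM, hR]
    rw [key]
    ring
  -- assembling
  have hf2 : (fun n : ℕ => M n * (Lratio n - R n)) =O[atTop]
      fun n : ℕ => (n:ℝ) ^ (-(3:ℝ)/2) :=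
    mul_rpow_bigO' hMO hLR (by norm_num)
  have hf3 : (fun n : ℕ => (Λ n - M n) * Lratio n) =O[atTop]
      fun n : ℕ => (n:ℝ) ^ (-(3:ℝ)/2) :=
    mul_rpow_bigO' hΛM hLrO (by norm_num)
  have := (hE1.add hf2).add hf3
  exact this.congr_left fun n => by ring
end
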